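/- For all real numbers s, s' and any s̄ ∈ ℝ satisfying β(s̄) = (β(s) + β(s'))/2 (such an s̄ exists by the intermediate value theorem), one has (ν(s) − ν(s'))² ≤ 4 L_β L_ζ · [𝔅(s) + 𝔅(s') − 2 𝔅(s̄)], where ν(s) = ∫₀ˢ ζ'(q) β'(q) dq and 𝔅(s) = ∫₀ˢ ζ(q) β'(q) dq. -/

import Mathlib

open MeasureTheory intervalIntegral

open Set Function Filter

lemma mono_deriv_nonneg {f : ℝ → ℝ} (hf : Monotone f) (x : ℝ) : 0 ≤ deriv f x := by
  by_cases h : DifferentiableAt ℝ f x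
  · have h1 := h.hasDerivAt
    rw [hasDerivAt_iff_tendsto_slope] at h1
    have h2 : Tendsto (slope f x) (nhdsWithin x (Set.Ioi x)) (nhds (deriv f x)) :=
      h1.mono_left (nhdsGT_le_nhdsNE x)
    refine ge_of_tendsto h2 ?_
    filter_upwards [self_mem_nhdsWithin] with y hy
    have hxy : x < y := hy
    have h3 : 0 ≤ f y - f x := sub_nonneg.2 (hf hxy.le)
    rw [slope_def_field]
    exact div_nonneg h3 (by linarith)
  · simp [deriv_zero_of_not_differentiableAt h]

lemma lip_deriv_le {f : ℝ → ℝ} {K : ℝ} (hK : 0 ≤ K) (h : LipschitzWith K.toNNReal f) (x : ℝ) :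
    |deriv f x| ≤ K := by
  have := norm_deriv_le_of_lipschitzOn (univ_mem : Set.univ ∈ nhds x) (lipschitzOnWith_univ.2 h)
  simpa [Real.norm_eq_abs, Real.coe_toNNReal K hK] using this

lemma lip_mono_ftc {f : ℝ → ℝ} {K : ℝ} (hK : 0 ≤ K) (hm : Monotone f)
    (hl : LipschitzWith K.toNNReal f) {a c : ℝ} (hac : a ≤ c) :
    ∫ q in Set.Ioc a c, deriv f q = f c - f a := by
  have hcont : Continuous f := hl.continuous
  have hfs : ∀ x, hm.stieltjesFunction x = f x := fun x => by
    rw [hm.stieltjesFunction_eq]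
    exact rightLim_eq_of_tendsto
      ((hcont.tendsto x).mono_left nhdsWithin_le_nhds)
  set μ := hm.stieltjesFunction.measure with hμ
  have μIoc : ∀ x y : ℝ, x ≤ y → μ (Set.Ioc x y) = ENNReal.ofReal (f y - f x) := by
    intro x y _
    rw [StieltjesFunction.measure_Ioc, hfs, hfs]
  have hlipineq : ∀ x y : ℝ, x ≤ y → f y - f x ≤ K * (y - x) := by
    intro x y hxy
    have := hl.dist_le_mul y x
    rw [Real.dist_eq, Real.dist_eq] at this
    have h2 : |f y - f x| ≤ K * |y - x| := by
      simpa [Real.coe_toNNReal K hK] using this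
    rw [abs_of_nonneg (sub_nonneg.2 (hm hxy)), abs_of_nonneg (sub_nonneg.2 hxy)] at h2
    exact h2
  set g : ℝ → ℝ := fun x => K * x - f x with hg
  have hgm : Monotone g := by
    intro x y hxy
    have := hlipineq x y hxy
    simp only [hg]
    nlinarith
  have hgc : Continuous g := (continuous_const.mul continuous_id).sub hcont
  have hgs : ∀ x, hgm.stieltjesFunction x = g x := fun x => by
    rw [hgm.stieltjesFunction_eq]
    exact rightLim_eq_of_tendsto
      ((hgc.tendsto x).mono_left nhdsWithin_le_nhds)
  have key : μ + hgm.stieltjesFunction.measure = (ENNReal.ofReal K) • volume := by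
    refine MeasureTheory.Measure.ext_of_Ioc' _ _ (fun x y hxy => ?_) (fun x y hxy => ?_)
    · simp only [Measure.add_apply]
      exact ENNReal.add_ne_top.2 ⟨((measure_Ioc_lt_top).ne), ((measure_Ioc_lt_top).ne)⟩
    have h1 : μ (Set.Ioc x y) = ENNReal.ofReal (f y - f x) := μIoc x y hxy.le
    have h2 : hgm.stieltjesFunction.measure (Set.Ioc x y) = ENNReal.ofReal (g y - g x) := by
      rw [StieltjesFunction.measure_Ioc, hgs, hgs]
    have hf0 : 0 ≤ f y - f x := sub_nonneg.2 (hm hxy.le)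
    have hg0 : 0 ≤ g y - g x := sub_nonneg.2 (hgm hxy.le)
    simp only [Measure.add_apply, Measure.smul_apply, smul_eq_mul, h1, h2, Real.volume_Ioc]
    rw [← ENNReal.ofReal_add hf0 hg0, ← ENNReal.ofReal_mul hK]
    congr 1
    simp only [hg]; ring
  have hacμ : μ ≪ volume := by
    refine Measure.AbsolutelyContinuous.mk (fun sset hsmeas hs0 => ?_)
    have h1 : μ sset ≤ (μ + hgm.stieltjesFunction.measure) sset := by
      simp [Measure.add_apply]
    rw [key] at h1
    simp only [Measure.smul_apply, smul_eq_mul, hs0, mul_zero] at h1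
    exact le_antisymm h1 zero_le
  have hder : ∀ᵐ x, deriv f x = (μ.rnDeriv volume x).toReal := by
    filter_upwards [hm.ae_hasDerivAt] with x hx
    exact hx.deriv
  have : ∫ q in Set.Ioc a c, deriv f q = ∫ q in Set.Ioc a c, (μ.rnDeriv volume q).toReal := by
    exact integral_congr_ae (ae_restrict_of_ae hder)
  rw [this, Measure.setIntegral_toReal_rnDeriv hacμ (Set.Ioc a c), measureReal_def, μIoc a c hac,
    ENNReal.toReal_ofReal (sub_nonneg.2 (hm hac))]

lemma half_lemma (a c : ℝ) (hac : a ≤ c) (z b W : ℝ → ℝ) (Lb Lz : ℝ)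
    (hLb : 0 ≤ Lb) (hLz : 0 ≤ Lz)
    (hzm : Measurable z) (hbm : Measurable b) (hWm : Measurable W)
    (hz0 : ∀ x, 0 ≤ z x) (hb0 : ∀ x, 0 ≤ b x)
    (hzL : ∀ x, z x ≤ Lz) (hbL : ∀ x, b x ≤ Lb)
    (hW : ∀ r ∈ Set.Ioc a c, (∫ q in Set.Ioc a c ∩ Set.Iic r, z q) ≤ W r)
    (hWb : ∀ r ∈ Set.Ioc a c, 0 ≤ W r ∧ W r ≤ Lz * (c - a)) :
    (∫ q in Set.Ioc a c, z q * b q) ^ 2 ≤ 2 * Lb * Lz * ∫ q in Set.Ioc a c, W q * b q := by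
  set ν := volume.restrict (Set.Ioc a c) with hνdef
  have hfin : IsFiniteMeasure ν := ⟨by
    rw [Measure.restrict_apply_univ]; exact measure_Ioc_lt_top⟩
  have hbdd : ∀ (f : ℝ → ℝ), Measurable f →
      (∀ᵐ q ∂ν, |f q| ≤ Lz * (c - a) + Lz * Lb + Lz + Lb + Lz * (c - a) * Lb) → Integrable f ν := by
    intro f hf hCb
    exact Integrable.mono' (integrable_const _) hf.aestronglyMeasurable
      (hCb.mono fun q h => by simpa using h)
  have habs : ∀ x, |z x| ≤ Lz := fun x => abs_le.2 ⟨by linarith [hz0 x, hzL x], hzL x⟩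
  have hbabs : ∀ x, |b x| ≤ Lb := fun x => abs_le.2 ⟨by linarith [hb0 x, hbL x], hbL x⟩
  have hca : 0 ≤ c - a := by linarith
  have hz_int : Integrable z ν := hbdd z hzm (ae_of_all _ fun q => by
    have := habs q; nlinarith [mul_nonneg hLz hLb, mul_nonneg (mul_nonneg hLz hca) hLb, mul_nonneg hLz hca])
  have hb_int : Integrable b ν := hbdd b hbm (ae_of_all _ fun q => by
    have := hbabs q; nlinarith [mul_nonneg hLz hLb, mul_nonneg (mul_nonneg hLz hca) hLb,
      mul_nonneg hLz hca])
  have hzb_int : Integrable (fun q => z q * b q) ν := hbdd _ (hzm.mul hbm)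
    (ae_of_all _ fun q => by
      have h1 : |z q * b q| ≤ Lz * Lb := by
        rw [abs_mul]
        exact mul_le_mul (habs q) (hbabs q) (abs_nonneg _) hLz
      nlinarith [mul_nonneg (mul_nonneg hLz hca) hLb, mul_nonneg hLz hca])
  have hWb_int : Integrable (fun q => W q * b q) ν := by
    apply hbdd _ (hWm.mul hbm)
    rw [ae_restrict_iff' measurableSet_Ioc]
    refine ae_of_all _ fun q hq => ?_
    have h1 := (hWb q hq).1
    have h2 := (hWb q hq).2
    have h3 : |W q * b q| ≤ Lz * (c - a) * Lb := by
      rw [abs_mul, abs_of_nonneg h1]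
      exact mul_le_mul h2 (hbabs q) (abs_nonneg _) (mul_nonneg hLz hca)
    show |W q * b q| ≤ _
    nlinarith [mul_nonneg hLz hca, mul_nonneg hLz hLb]
  have hS : MeasurableSet {p : ℝ × ℝ | p.1 ≤ p.2} := measurableSet_le measurable_fst measurable_snd
  have hP1 : Integrable (fun p : ℝ × ℝ => z p.1 * b p.2) (ν.prod ν) := hz_int.mul_prod hb_int
  have hP2 : Integrable (fun p : ℝ × ℝ => z p.2 * b p.1) (ν.prod ν) := by
    have h := hb_int.mul_prod hz_int
    exact h.congr (ae_of_all _ fun p => mul_comm _ _)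
  have hI1 : Integrable ({p : ℝ × ℝ | p.1 ≤ p.2}.indicator (fun p => z p.1 * b p.2)) (ν.prod ν) :=
    hP1.indicator hS
  have hI2 : Integrable ({p : ℝ × ℝ | p.1 ≤ p.2}ᶜ.indicator (fun p => z p.2 * b p.1)) (ν.prod ν) :=
    hP2.indicator hS.compl
  have hsq : (∫ q, z q * b q ∂ν) ^ 2
      = ∫ p : ℝ × ℝ, (z p.1 * b p.1) * (z p.2 * b p.2) ∂(ν.prod ν) := by
    rw [sq, ← integral_prod_mul (fun q => z q * b q) (fun q => z q * b q)]
  have hpt : ∀ p : ℝ × ℝ, (z p.1 * b p.1) * (z p.2 * b p.2) ≤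
      Lb * Lz * ({p : ℝ × ℝ | p.1 ≤ p.2}.indicator (fun p => z p.1 * b p.2) p
        + {p : ℝ × ℝ | p.1 ≤ p.2}ᶜ.indicator (fun p => z p.2 * b p.1) p) := by
    intro p
    by_cases h : p.1 ≤ p.2
    · have hmem : p ∈ {p : ℝ × ℝ | p.1 ≤ p.2} := h
      rw [Set.indicator_of_mem hmem, Set.indicator_of_notMem (by simpa using h), add_zero]
      have e1 : b p.1 * z p.2 ≤ Lb * Lz := mul_le_mul (hbL p.1) (hzL p.2) (hz0 p.2) hLb
      have e2 : 0 ≤ z p.1 * b p.2 := mul_nonneg (hz0 p.1) (hb0 p.2)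
      calc (z p.1 * b p.1) * (z p.2 * b p.2) = (b p.1 * z p.2) * (z p.1 * b p.2) := by ring
        _ ≤ (Lb * Lz) * (z p.1 * b p.2) := mul_le_mul_of_nonneg_right e1 e2
    · have hmem : p ∈ {p : ℝ × ℝ | p.1 ≤ p.2}ᶜ := h
      have hnot : p ∉ {p : ℝ × ℝ | p.1 ≤ p.2} := h
      rw [Set.indicator_of_notMem hnot, Set.indicator_of_mem hmem, zero_add]
      have e1 : b p.2 * z p.1 ≤ Lb * Lz := mul_le_mul (hbL p.2) (hzL p.1) (hz0 p.1) hLb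
      have e2 : 0 ≤ z p.2 * b p.1 := mul_nonneg (hz0 p.2) (hb0 p.1)
      calc (z p.1 * b p.1) * (z p.2 * b p.2) = (b p.2 * z p.1) * (z p.2 * b p.1) := by ring
        _ ≤ (Lb * Lz) * (z p.2 * b p.1) := mul_le_mul_of_nonneg_right e1 e2
  have hmain : (∫ q, z q * b q ∂ν) ^ 2 ≤ Lb * Lz *
      ((∫ p, {p : ℝ × ℝ | p.1 ≤ p.2}.indicator (fun p => z p.1 * b p.2) p ∂(ν.prod ν))
        + ∫ p, {p : ℝ × ℝ | p.1 ≤ p.2}ᶜ.indicator (fun p => z p.2 * b p.1) p ∂(ν.prod ν)) := by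
    rw [hsq, ← integral_add hI1 hI2, ← MeasureTheory.integral_const_mul]
    exact MeasureTheory.integral_mono (hzb_int.mul_prod hzb_int) ((hI1.add hI2).const_mul _) hpt
  -- bound the first term
  have hT1 : (∫ p, {p : ℝ × ℝ | p.1 ≤ p.2}.indicator (fun p => z p.1 * b p.2) p ∂(ν.prod ν))
      ≤ ∫ r, W r * b r ∂ν := by
    rw [integral_prod_symm _ hI1]
    refine MeasureTheory.integral_mono_ae hI1.integral_prod_right hWb_int ?_
    rw [hνdef]
    filter_upwards [ae_restrict_mem measurableSet_Ioc] with r hr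
    have e1 : ∀ q : ℝ, {p : ℝ × ℝ | p.1 ≤ p.2}.indicator (fun p => z p.1 * b p.2) (q, r)
        = (Set.Iic r).indicator (fun q => z q * b r) q := by
      intro q
      by_cases h : q ≤ r <;> simp [Set.indicator_apply, h]
    calc (∫ q, {p : ℝ × ℝ | p.1 ≤ p.2}.indicator (fun p => z p.1 * b p.2) (q, r) ∂ν)
        = ∫ q, (Set.Iic r).indicator (fun q => z q * b r) q ∂ν :=
          integral_congr_ae (ae_of_all _ e1)
      _ = ∫ q in Set.Iic r, z q * b r ∂ν := integral_indicator measurableSet_Iic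
      _ = ∫ q in Set.Ioc a c ∩ Set.Iic r, z q * b r := by
          rw [hνdef, Measure.restrict_restrict measurableSet_Iic, Set.inter_comm]
      _ = (∫ q in Set.Ioc a c ∩ Set.Iic r, z q) * b r := integral_mul_const _ _
      _ ≤ W r * b r := mul_le_mul_of_nonneg_right (hW r hr) (hb0 r)
  -- bound the second term
  have hT2 : (∫ p, {p : ℝ × ℝ | p.1 ≤ p.2}ᶜ.indicator (fun p => z p.2 * b p.1) p ∂(ν.prod ν))
      ≤ ∫ q, W q * b q ∂ν := by
    rw [integral_prod _ hI2]
    refine MeasureTheory.integral_mono_ae hI2.integral_prod_left hWb_int ?_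
    rw [hνdef]
    filter_upwards [ae_restrict_mem measurableSet_Ioc] with q hq
    have e1 : ∀ r : ℝ, {p : ℝ × ℝ | p.1 ≤ p.2}ᶜ.indicator (fun p => z p.2 * b p.1) (q, r)
        = (Set.Iio q).indicator (fun r => z r * b q) r := by
      intro r
      by_cases h : r < q
      · simp [Set.indicator_apply, h, not_le.2 h]
      · simp [Set.indicator_apply, h, not_lt.1 h]
    have hsub : Set.Iio q ∩ Set.Ioc a c ⊆ Set.Ioc a c ∩ Set.Iic q := by
      rintro x ⟨h1, h2⟩; exact ⟨h2, Set.mem_Iic.2 (le_of_lt (Set.mem_Iio.1 h1))⟩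
    have hzint2 : IntegrableOn z (Set.Ioc a c ∩ Set.Iic q) := by
      have h5 : IntegrableOn z (Set.Ioc a c) volume := by
        rw [IntegrableOn, ← hνdef]; exact hz_int
      exact h5.mono_set Set.inter_subset_left
    calc (∫ r, {p : ℝ × ℝ | p.1 ≤ p.2}ᶜ.indicator (fun p => z p.2 * b p.1) (q, r) ∂ν)
        = ∫ r, (Set.Iio q).indicator (fun r => z r * b q) r ∂ν :=
          integral_congr_ae (ae_of_all _ e1)
      _ = ∫ r in Set.Iio q, z r * b q ∂ν := integral_indicator measurableSet_Iio
      _ = ∫ r in Set.Iio q ∩ Set.Ioc a c, z r * b q := by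
          rw [hνdef, Measure.restrict_restrict measurableSet_Iio]
      _ = (∫ r in Set.Iio q ∩ Set.Ioc a c, z r) * b q := integral_mul_const _ _
      _ ≤ (∫ r in Set.Ioc a c ∩ Set.Iic q, z r) * b q := by
          refine mul_le_mul_of_nonneg_right ?_ (hb0 q)
          exact setIntegral_mono_set hzint2 (ae_of_all _ fun x => hz0 x)
            (HasSubset.Subset.eventuallyLE hsub)
      _ ≤ W q * b q := mul_le_mul_of_nonneg_right (hW q hq) (hb0 q)
  have hLbLz : 0 ≤ Lb * Lz := mul_nonneg hLb hLz
  calc (∫ q in Set.Ioc a c, z q * b q) ^ 2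
      ≤ Lb * Lz * ((∫ r, W r * b r ∂ν) + ∫ q, W q * b q ∂ν) :=
        hmain.trans (mul_le_mul_of_nonneg_left (add_le_add hT1 hT2) hLbLz)
    _ = 2 * Lb * Lz * ∫ q in Set.Ioc a c, W q * b q := by rw [hνdef]; ring

lemma lip_sub_le {f : ℝ → ℝ} {K : ℝ} (hK : 0 ≤ K) (hl : LipschitzWith K.toNNReal f)
    (x y : ℝ) : |f y - f x| ≤ K * |y - x| := by
  have := hl.dist_le_mul y x
  rw [Real.dist_eq, Real.dist_eq] at this
  simpa [Real.coe_toNNReal K hK] using this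

lemma one_sided {β ζ : ℝ → ℝ} {Lβ Lζ : ℝ} (hLβ : 0 ≤ Lβ) (hLζ : 0 ≤ Lζ)
    (hβmono : Monotone β) (hζmono : Monotone ζ)
    (hβlip : LipschitzWith Lβ.toNNReal β) (hζlip : LipschitzWith Lζ.toNNReal ζ)
    {a c : ℝ} (hac : a ≤ c) :
    (∫ q in Set.Ioc a c, deriv ζ q * deriv β q) ^ 2
      ≤ 2 * Lβ * Lζ * ∫ q in Set.Ioc a c, (ζ q - ζ a) * deriv β q := by
  refine half_lemma a c hac (deriv ζ) (deriv β) (fun r => ζ r - ζ a) Lβ Lζ hLβ hLζ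
    (measurable_deriv ζ) (measurable_deriv β) ((hζlip.continuous.measurable).sub measurable_const)
    (mono_deriv_nonneg hζmono) (mono_deriv_nonneg hβmono)
    (fun x => (abs_le.1 (lip_deriv_le hLζ hζlip x)).2)
    (fun x => (abs_le.1 (lip_deriv_le hLβ hβlip x)).2)
    ?_ ?_
  · intro r hr
    have h1 : Set.Ioc a c ∩ Set.Iic r = Set.Ioc a r := by
      ext t
      constructor
      · rintro ⟨⟨h1, _⟩, h3⟩; exact ⟨h1, h3⟩
      · rintro ⟨h1, h3⟩; exact ⟨⟨h1, h3.trans hr.2⟩, h3⟩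
    rw [h1, lip_mono_ftc hLζ hζmono hζlip hr.1.le]
  · intro r hr
    constructor
    · exact sub_nonneg.2 (hζmono hr.1.le)
    show ζ r - ζ a ≤ Lζ * (c - a)
    have h2 := lip_sub_le hLζ hζlip a r
    rw [abs_of_nonneg (sub_nonneg.2 (hζmono hr.1.le)), abs_of_nonneg (by linarith [hr.1] : (0:ℝ) ≤ r - a)] at h2
    have : Lζ * (r - a) ≤ Lζ * (c - a) := by
      apply mul_le_mul_of_nonneg_left _ hLζ
      linarith [hr.2]
    linarith

lemma intInt_of_bound {f : ℝ → ℝ} (hf : Measurable f) (u v : ℝ) (C : ℝ)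
    (h : ∀ q ∈ Set.Icc (min u v) (max u v), |f q| ≤ C) : IntervalIntegrable f volume u v := by
  rw [intervalIntegrable_iff]
  have hg : IntegrableOn (fun _ : ℝ => C) (Set.uIoc u v) volume :=
    integrableOn_const measure_Ioc_lt_top.ne
  refine hg.mono' hf.aestronglyMeasurable ?_
  filter_upwards [ae_restrict_mem measurableSet_Ioc] with q hq
  have hq2 : q ∈ Set.Icc (min u v) (max u v) := Set.Ioc_subset_Icc_self hq
  simpa using h q hq2

lemma centered_of_le {β ζ : ℝ → ℝ} {Lβ Lζ : ℝ} (hLβ : 0 ≤ Lβ) (hLζ : 0 ≤ Lζ)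
    (hβmono : Monotone β) (hζmono : Monotone ζ)
    (hβlip : LipschitzWith Lβ.toNNReal β) (hζlip : LipschitzWith Lζ.toNNReal ζ)
    {m x : ℝ} (hmx : m ≤ x) :
    (∫ q in m..x, deriv ζ q * deriv β q) ^ 2
      ≤ 2 * Lβ * Lζ * ((∫ q in m..x, ζ q * deriv β q) - ζ m * (β x - β m)) := by
  rw [intervalIntegral.integral_of_le hmx, intervalIntegral.integral_of_le hmx]
  have hbnd : ∀ q ∈ Set.Ioc m x, |(ζ q - ζ m) * deriv β q| ≤ Lζ * (x - m) * Lβ := by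
    intro q hq
    rw [abs_mul]
    have h1 := lip_sub_le hLζ hζlip m q
    rw [abs_of_nonneg (by linarith [hq.1] : (0:ℝ) ≤ q - m)] at h1
    have h2 : |ζ q - ζ m| ≤ Lζ * (x - m) := by
      refine h1.trans (mul_le_mul_of_nonneg_left ?_ hLζ)
      linarith [hq.2]
    exact mul_le_mul h2 (lip_deriv_le hLβ hβlip q) (abs_nonneg _)
      (mul_nonneg hLζ (by linarith))
  have hint1 : IntegrableOn (fun q => (ζ q - ζ m) * deriv β q) (Set.Ioc m x) volume := by
    have hg : IntegrableOn (fun _ : ℝ => Lζ * (x - m) * Lβ) (Set.Ioc m x) volume :=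
      integrableOn_const measure_Ioc_lt_top.ne
    refine hg.mono'
      (((hζlip.continuous.measurable).sub measurable_const).mul
        (measurable_deriv β)).aestronglyMeasurable ?_
    filter_upwards [ae_restrict_mem measurableSet_Ioc] with q hq
    rw [Real.norm_eq_abs]
    exact hbnd q hq
  have hint2 : IntegrableOn (fun q => ζ m * deriv β q) (Set.Ioc m x) volume := by
    have hg : IntegrableOn (fun _ : ℝ => |ζ m| * Lβ) (Set.Ioc m x) volume :=
      integrableOn_const measure_Ioc_lt_top.ne
    refine hg.mono'
      ((measurable_deriv β).const_mul (ζ m)).aestronglyMeasurable ?_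
    filter_upwards [ae_restrict_mem measurableSet_Ioc] with q hq
    have := lip_deriv_le hLβ hβlip q
    rw [Real.norm_eq_abs, abs_mul]
    exact mul_le_mul_of_nonneg_left this (abs_nonneg _)
  have expand : ∫ q in Set.Ioc m x, ζ q * deriv β q
      = (∫ q in Set.Ioc m x, (ζ q - ζ m) * deriv β q) + ζ m * (β x - β m) := by
    have heq : (fun q => ζ q * deriv β q)
        = fun q => (ζ q - ζ m) * deriv β q + ζ m * deriv β q := by
      funext q; ring
    rw [heq, integral_add hint1 hint2, MeasureTheory.integral_const_mul,
      lip_mono_ftc hLβ hβmono hβlip hmx]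
  rw [expand, add_sub_cancel_right]
  exact one_sided hLβ hLζ hβmono hζmono hβlip hζlip hmx

lemma mono_neg_comp {f : ℝ → ℝ} (hf : Monotone f) : Monotone (fun t => -f (-t)) := by
  intro u v h
  simp only [neg_le_neg_iff]
  exact hf (neg_le_neg h)

lemma lip_neg_comp {f : ℝ → ℝ} {K : ℝ} (hl : LipschitzWith K.toNNReal f) :
    LipschitzWith K.toNNReal (fun t => -f (-t)) := by
  rw [lipschitzWith_iff_dist_le_mul] at hl ⊢
  intro u v
  have := hl (-u) (-v)
  simpa [dist_neg_neg] using this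

lemma deriv_neg_comp (f : ℝ → ℝ) (t : ℝ) : deriv (fun s => -f (-s)) t = deriv f (-t) := by
  by_cases h : DifferentiableAt ℝ f (-t)
  · have h1 : HasDerivAt (fun s : ℝ => f (-s)) (deriv f (-t) * (-1)) t :=
      HasDerivAt.comp t h.hasDerivAt (hasDerivAt_neg t)
    have h2 := h1.neg
    have h3 := h2.deriv
    simpa using h3
  · have h2 : ¬ DifferentiableAt ℝ (fun s => -f (-s)) t := by
      intro hc
      apply h
      have hc' : DifferentiableAt ℝ (fun s : ℝ => -f (-s)) (-(-t)) := by rwa [neg_neg]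
      have h4 := (hc'.comp (-t) differentiable_neg.differentiableAt).neg
      have h5 : (fun u : ℝ => -(((fun s : ℝ => -f (-s)) ∘ Neg.neg) u)) = f := by
        funext u; simp [Function.comp]
      rw [← h5]; exact h4
    rw [deriv_zero_of_not_differentiableAt h, deriv_zero_of_not_differentiableAt h2]

lemma centered {β ζ : ℝ → ℝ} {Lβ Lζ : ℝ} (hLβ : 0 ≤ Lβ) (hLζ : 0 ≤ Lζ)
    (hβmono : Monotone β) (hζmono : Monotone ζ)
    (hβlip : LipschitzWith Lβ.toNNReal β) (hζlip : LipschitzWith Lζ.toNNReal ζ)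
    (m x : ℝ) :
    (∫ q in m..x, deriv ζ q * deriv β q) ^ 2
      ≤ 2 * Lβ * Lζ * ((∫ q in m..x, ζ q * deriv β q) - ζ m * (β x - β m)) := by
  rcases le_total m x with hmx | hxm
  · exact centered_of_le hLβ hLζ hβmono hζmono hβlip hζlip hmx
  · have key := centered_of_le hLβ hLζ (mono_neg_comp hβmono) (mono_neg_comp hζmono)
      (lip_neg_comp hβlip) (lip_neg_comp hζlip) (neg_le_neg hxm)
    have e1 : (∫ q in (-m)..(-x), deriv (fun t => -ζ (-t)) q * deriv (fun t => -β (-t)) q)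
        = -∫ q in m..x, deriv ζ q * deriv β q := by
      have hEq : Set.EqOn (fun q => deriv (fun t => -ζ (-t)) q * deriv (fun t => -β (-t)) q)
          (fun q => (fun u => deriv ζ u * deriv β u) (-q)) (Set.uIcc (-m) (-x)) :=
        fun q _ => by simp only [deriv_neg_comp]
      rw [intervalIntegral.integral_congr hEq,
        intervalIntegral.integral_comp_neg (f := fun u => deriv ζ u * deriv β u), neg_neg, neg_neg,
        intervalIntegral.integral_symm]
    have e2 : (∫ q in (-m)..(-x), (fun t => -ζ (-t)) q * deriv (fun t => -β (-t)) q)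
        = ∫ q in m..x, ζ q * deriv β q := by
      have hEq : Set.EqOn (fun q => (fun t => -ζ (-t)) q * deriv (fun t => -β (-t)) q)
          (fun q => (fun u => -(ζ u * deriv β u)) (-q)) (Set.uIcc (-m) (-x)) := by
        intro q _
        simp only [deriv_neg_comp]
        ring
      rw [intervalIntegral.integral_congr hEq,
        intervalIntegral.integral_comp_neg (f := fun u => -(ζ u * deriv β u)), neg_neg, neg_neg,
        intervalIntegral.integral_neg, intervalIntegral.integral_symm, neg_neg]
    have e3 : (fun t => -ζ (-t)) (-m) * ((fun t => -β (-t)) (-x) - (fun t => -β (-t)) (-m))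
        = ζ m * (β x - β m) := by simp; ring
    rw [e1, e2, e3, neg_sq] at key
    exact key

/-- For all reals `s, s'` and any `s̄` with `β s̄ = (β s + β s')/2`, one has
`(ν s - ν s')² ≤ 4 Lβ Lζ (𝔅 s + 𝔅 s' - 2 𝔅 s̄)`, where
`ν s = ∫ q in 0..s, ζ' q * β' q` and `𝔅 s = ∫ q in 0..s, ζ q * β' q`. -/
theorem stmt6 (β ζ : ℝ → ℝ) (Lβ Lζ : ℝ) (hLβ : 0 < Lβ) (hLζ : 0 < Lζ)
    (hβmono : Monotone β) (hζmono : Monotone ζ)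
    (hβlip : LipschitzWith Lβ.toNNReal β) (hζlip : LipschitzWith Lζ.toNNReal ζ)
    (hβ0 : β 0 = 0) (hζ0 : ζ 0 = 0)
    (ν : ℝ → ℝ) (hν : ∀ s : ℝ, ν s = ∫ q in (0:ℝ)..s, deriv ζ q * deriv β q)
    (𝔅 : ℝ → ℝ) (h𝔅 : ∀ s : ℝ, 𝔅 s = ∫ q in (0:ℝ)..s, ζ q * deriv β q)
    (s s' sbar : ℝ) (hsbar : β sbar = (β s + β s') / 2) :
    (ν s - ν s') ^ 2 ≤ 4 * Lβ * Lζ * (𝔅 s + 𝔅 s' - 2 * 𝔅 sbar) := by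
  have hLβ' : (0:ℝ) ≤ Lβ := hLβ.le
  have hLζ' : (0:ℝ) ≤ Lζ := hLζ.le
  have hIf : ∀ u v : ℝ, IntervalIntegrable (fun q => deriv ζ q * deriv β q) volume u v := by
    intro u v
    refine intInt_of_bound ((measurable_deriv ζ).mul (measurable_deriv β)) u v (Lζ * Lβ) ?_
    intro q _
    rw [Pi.mul_apply, abs_mul]
    exact mul_le_mul (lip_deriv_le hLζ' hζlip q) (lip_deriv_le hLβ' hβlip q)
      (abs_nonneg _) hLζ'
  have hIg : ∀ u v : ℝ, IntervalIntegrable (fun q => ζ q * deriv β q) volume u v := by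
    intro u v
    refine intInt_of_bound ((hζlip.continuous.measurable).mul (measurable_deriv β)) u v
      ((|ζ u| + Lζ * |v - u|) * Lβ) ?_
    intro q hq
    rw [Pi.mul_apply, abs_mul]
    refine mul_le_mul ?_ (lip_deriv_le hLβ' hβlip q) (abs_nonneg _) ?_
    · have h1 := lip_sub_le hLζ' hζlip u q
      have h2 : |q - u| ≤ |v - u| := by
        rw [Set.mem_Icc] at hq
        rcases le_total u v with h | h
        · rw [min_eq_left h, max_eq_right h] at hq
          rw [abs_of_nonneg (by linarith [hq.1] : (0:ℝ) ≤ q - u),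
            abs_of_nonneg (by linarith : (0:ℝ) ≤ v - u)]
          linarith [hq.2]
        · rw [min_eq_right h, max_eq_left h] at hq
          rw [abs_of_nonpos (by linarith [hq.2] : q - u ≤ 0),
            abs_of_nonpos (by linarith : v - u ≤ 0)]
          linarith [hq.1]
      calc |ζ q| = |ζ u + (ζ q - ζ u)| := by ring_nf
        _ ≤ |ζ u| + |ζ q - ζ u| := abs_add_le _ _
        _ ≤ |ζ u| + Lζ * |v - u| := by
            have := mul_le_mul_of_nonneg_left h2 hLζ'
            linarith
    · positivity
  have hν1 : ν s - ν sbar = ∫ q in sbar..s, deriv ζ q * deriv β q := by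
    rw [hν s, hν sbar]
    exact integral_interval_sub_left (hIf 0 s) (hIf 0 sbar)
  have hν2 : ν s' - ν sbar = ∫ q in sbar..s', deriv ζ q * deriv β q := by
    rw [hν s', hν sbar]
    exact integral_interval_sub_left (hIf 0 s') (hIf 0 sbar)
  have h𝔅1 : 𝔅 s - 𝔅 sbar = ∫ q in sbar..s, ζ q * deriv β q := by
    rw [h𝔅 s, h𝔅 sbar]
    exact integral_interval_sub_left (hIg 0 s) (hIg 0 sbar)
  have h𝔅2 : 𝔅 s' - 𝔅 sbar = ∫ q in sbar..s', ζ q * deriv β q := by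
    rw [h𝔅 s', h𝔅 sbar]
    exact integral_interval_sub_left (hIg 0 s') (hIg 0 sbar)
  set X := ∫ q in sbar..s, deriv ζ q * deriv β q with hX
  set Y := ∫ q in sbar..s', deriv ζ q * deriv β q with hY
  have key1 := centered hLβ' hLζ' hβmono hζmono hβlip hζlip sbar s
  have key2 := centered hLβ' hLζ' hβmono hζmono hβlip hζlip sbar s'
  rw [← hX, ← h𝔅1] at key1
  rw [← hY, ← h𝔅2] at key2
  have hzero : (β s - β sbar) + (β s' - β sbar) = 0 := by
    rw [hsbar]; ring
  have hXY : ν s - ν s' = X - Y := by linarith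
  have hsq : (X - Y) ^ 2 ≤ 2 * X ^ 2 + 2 * Y ^ 2 := by nlinarith [sq_nonneg (X + Y)]
  have hsum : (𝔅 s - 𝔅 sbar - ζ sbar * (β s - β sbar))
      + (𝔅 s' - 𝔅 sbar - ζ sbar * (β s' - β sbar))
      = 𝔅 s + 𝔅 s' - 2 * 𝔅 sbar := by
    have : ζ sbar * (β s - β sbar) + ζ sbar * (β s' - β sbar)
        = ζ sbar * ((β s - β sbar) + (β s' - β sbar)) := by ring
    rw [show (𝔅 s - 𝔅 sbar - ζ sbar * (β s - β sbar))
      + (𝔅 s' - 𝔅 sbar - ζ sbar * (β s' - β sbar))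
      = 𝔅 s + 𝔅 s' - 2 * 𝔅 sbar - ζ sbar * ((β s - β sbar) + (β s' - β sbar)) from by ring,
      hzero, mul_zero, sub_zero]
  rw [hXY]
  calc (X - Y) ^ 2 ≤ 2 * X ^ 2 + 2 * Y ^ 2 := hsq
    _ ≤ 2 * (2 * Lβ * Lζ * (𝔅 s - 𝔅 sbar - ζ sbar * (β s - β sbar)))
        + 2 * (2 * Lβ * Lζ * (𝔅 s' - 𝔅 sbar - ζ sbar * (β s' - β sbar))) := by linarith
    _ = 4 * Lβ * Lζ * ((𝔅 s - 𝔅 sbar - ζ sbar * (β s - β sbar))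
        + (𝔅 s' - 𝔅 sbar - ζ sbar * (β s' - β sbar))) := by ring
    _ = 4 * Lβ * Lζ * (𝔅 s + 𝔅 s' - 2 * 𝔅 sbar) := by rw [hsum]
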